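/- In a Blocksworld state s with a finite set of blocks and a target role O forming a forest (each block has at most one target block below it, and O is acyclic), if some block is misplaced, then there exists a lowest misplaced block: a misplaced block x such that the block y with (x,y) ∈ O is either absent (x should be on the table), or y is well-placed. -/
import Mathlib


/-- A block is well-placed (w.r.t. the state `onb`, where `onb x = some y` means
`x` is on `y` and `onb x = none` means `x` is on the table, and the functional
goal relation `O`, where `O x = some y` means the goal atom `on(x,y)` and
`O x = none` that `x` should be on the table): `x` is well-placed iff it has no
target and is on the table, or it is on its target `y` and `y` is well-placed. -/
inductive WellPlaced {Block : Type} (onb O : Block → Option Block) : Block → Prop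
  | table (x : Block) : O x = none → onb x = none → WellPlaced onb O x
  | on (x y : Block) : O x = some y → onb x = some y → WellPlaced onb O y →
      WellPlaced onb O x

/-- in a Blocksworld state with finitely many blocks and an acyclic
functional target role `O` (a forest), if some block is misplaced then there is a
lowest misplaced block: a misplaced `x` whose target block is absent (`x` should
be on the table) or well-placed. -/
theorem stmt7 {Block : Type} [Finite Block]
    (onb O : Block → Option Block)
    (hacyc : ∀ x : Block,
      ¬ Relation.TransGen (fun a b : Block => O a = some b) x x)
    (hmis : ∃ x : Block, ¬ WellPlaced onb O x) :
    ∃ x : Block, ¬ WellPlaced onb O x ∧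
      (O x = none ∨ ∃ y : Block, O x = some y ∧ WellPlaced onb O y) := by
  obtain ⟨x0, hx0⟩ := hmis
  set r : Block → Block → Prop := fun a b => O b = some a with hr
  have hwf : WellFounded r := by
    have h1 : IsTrans Block (Relation.TransGen r) := ⟨fun a b c => Relation.TransGen.trans⟩
    have h2 : IsIrrefl Block (Relation.TransGen r) := by
      constructor
      intro a ha
      exact hacyc a ((Relation.transGen_swap).mpr ha)
    have := Finite.wellFounded_of_trans_of_irrefl (Relation.TransGen r)
    exact Subrelation.wf (fun h => Relation.TransGen.single h) this
  induction x0 using hwf.induction with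
  | _ x ih =>
    rcases hO : O x with _ | y
    · exact ⟨x, hx0, Or.inl hO⟩
    · by_cases hy : WellPlaced onb O y
      · exact ⟨x, hx0, Or.inr ⟨y, hO, hy⟩⟩
      · exact ih y hO hy
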